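/- If G is a K_t-minor-free graph of order n and diameter d with a resolving set of size k, then n ≤ (dk+1)^{t−1} + 1. -/

import Mathlib

variable {V : Type*}

/-- A set `R` of vertices of a graph `G` is a resolving set. -/
def SimpleGraph.IsResolvingSet (G : SimpleGraph V) (R : Set V) : Prop :=
  ∀ u v : V, u ≠ v → ∃ x ∈ R, G.dist x u ≠ G.dist x v

/-- `G` contains `K_t` as a minor: there exist `t` pairwise disjoint non-empty connected
vertex subsets of `G` with an edge between every two of them. -/
def SimpleGraph.HasCompleteMinor (G : SimpleGraph V) (t : ℕ) : Prop :=
  ∃ C : Fin t → Set V,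
    (∀ i, (C i).Nonempty) ∧
    (∀ i, (G.induce (C i)).Connected) ∧
    (∀ i j, i ≠ j → Disjoint (C i) (C j)) ∧
    (∀ i j, i ≠ j → ∃ a ∈ C i, ∃ b ∈ C j, G.Adj a b)

section Auxiliary

variable {G : SimpleGraph V}

private lemma adj_dist_le (hG : G.Connected) (x u u' : V) (h : G.Adj u u') :
    G.dist x u ≤ G.dist x u' + 1 := by
  have h1 : G.dist x u ≤ G.dist x u' + G.dist u' u := hG.dist_triangle
  have h2 : G.dist u' u ≤ 1 := by
    simpa using G.dist_le h.symm.toWalk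
  omega

private lemma exists_adj_dist (hG : G.Connected) (x u : V) (n : ℕ) (h : G.dist x u = n + 1) :
    ∃ u', G.Adj u u' ∧ G.dist x u' = n := by
  obtain ⟨p, hp⟩ := hG.exists_walk_length_eq_dist u x
  have hxu : G.dist u x = n + 1 := by rwa [SimpleGraph.dist_comm] at h
  cases p with
  | nil => simp at hxu
  | @cons _ w _ hadj q =>
    refine ⟨w, hadj, ?_⟩
    have hq : G.dist x w ≤ n := by
      have := G.dist_le q.reverse
      simp only [SimpleGraph.Walk.length_reverse] at this
      have hlen : q.length = n := by
        simp only [SimpleGraph.Walk.length_cons] at hp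
        omega
      omega
    have h2 : G.dist x u ≤ G.dist x w + 1 := adj_dist_le hG x u w hadj
    omega

private lemma complete_minor_of_balls (hG : G.Connected) {t : ℕ} (c : Fin t → V) (r : Fin t → ℕ)
    (hpriv : ∀ i, ∃ p, G.dist (c i) p ≤ r i ∧ ∀ j, j ≠ i → r j < G.dist (c j) p)
    (hpair : ∀ i j, i ≠ j → ∃ v, G.dist (c i) v ≤ r i ∧ G.dist (c j) v ≤ r j ∧
      ∀ l, l ≠ i → l ≠ j → r l < G.dist (c l) v) :
    G.HasCompleteMinor t := by
  rcases Nat.eq_zero_or_pos t with rfl | htpos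
  · exact ⟨Fin.elim0, fun i => i.elim0, fun i => i.elim0, fun i => i.elim0, fun i => i.elim0⟩
  -- the integer "score" of a vertex relative to ball `j`
  set sc : Fin t → V → ℤ := fun j u => (G.dist (c j) u : ℤ) - r j with hsc
  -- lexicographic key: primarily the score, ties broken by the index
  set key : Fin t → V → ℤ := fun j u => t * sc j u + j with hkey
  have hkey_lt : ∀ (u : V) (i j : Fin t), sc i u < sc j u → key i u < key j u := by
    intro u i j h
    have h1 : sc i u + 1 ≤ sc j u := h
    have hi : (i : ℤ) < t := by exact_mod_cast i.isLt
    have hj : (0 : ℤ) ≤ (j : ℤ) := by positivity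
    have h2 : (t : ℤ) * (sc i u + 1) ≤ t * sc j u :=
      mul_le_mul_of_nonneg_left h1 (by positivity)
    have h3 : (t : ℤ) * (sc i u + 1) = t * sc i u + t := by ring
    simp only [hkey]
    omega
  have hkey_inj : ∀ (u : V) (i j : Fin t), key i u = key j u → i = j := by
    intro u i j h
    rcases lt_trichotomy (sc i u) (sc j u) with hlt | heq | hgt
    · exact absurd h (hkey_lt u i j hlt).ne
    · simp only [hkey, heq] at h
      have : (i : ℤ) = (j : ℤ) := by omega
      exact Fin.ext (by exact_mod_cast this)
    · exact absurd h.symm (hkey_lt u j i hgt).ne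
  have hmin : ∀ u : V, ∃ i : Fin t, ∀ j, key i u ≤ key j u := by
    intro u
    obtain ⟨i, -, h⟩ := Finset.exists_min_image Finset.univ (fun j => key j u)
      ⟨⟨0, htpos⟩, Finset.mem_univ _⟩
    exact ⟨i, fun j => h j (Finset.mem_univ j)⟩
  set κ : V → Fin t := fun u => (hmin u).choose with hκ
  have κle : ∀ (u : V) (j : Fin t), key (κ u) u ≤ key j u := fun u => (hmin u).choose_spec
  have κlt : ∀ (u : V) (j : Fin t), j ≠ κ u → key (κ u) u < key j u := by
    intro u j hj
    exact lt_of_le_of_ne (κle u j) fun h => hj (hkey_inj u (κ u) j h).symm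
  have κeq : ∀ (u : V) (i : Fin t), (∀ j, j ≠ i → key i u < key j u) → κ u = i := by
    intro u i h
    by_contra hne
    exact absurd (κle u i) (not_le.mpr (h (κ u) hne))
  have hsc_adj : ∀ (j : Fin t) (u u' : V), G.Adj u u' → sc j u - 1 ≤ sc j u' := by
    intro j u u' h
    have := adj_dist_le hG (c j) u u' h
    simp only [hsc]
    omega
  -- walking one step along a geodesic towards `c i` stays in region `i`
  have hstep : ∀ (i : Fin t) (u u' : V), κ u = i → G.Adj u u' →
      G.dist (c i) u' + 1 = G.dist (c i) u → κ u' = i := by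
    intro i u u' hu hadj hdist
    apply κeq
    intro j hj
    have h1 : key i u < key j u := by
      have := κlt u j (by rw [hu]; exact hj)
      rwa [hu] at this
    have h2 : sc i u' = sc i u - 1 := by
      simp only [hsc]
      omega
    have h3 : sc j u - 1 ≤ sc j u' := hsc_adj j u u' hadj
    have ht0 : (0 : ℤ) ≤ t := by positivity
    have h4 : (t : ℤ) * (sc j u - 1) ≤ t * sc j u' := mul_le_mul_of_nonneg_left h3 ht0
    have h5 : (t : ℤ) * (sc j u - 1) = t * sc j u - t := by ring
    have h6 : (t : ℤ) * sc i u' = t * sc i u - t := by rw [h2]; ring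
    simp only [hkey] at h1 ⊢
    omega
  -- every vertex of a region is connected, inside the region, to the center
  have hreach : ∀ (n : ℕ) (i : Fin t) (u : V) (hu : u ∈ {w | κ w = i}),
      G.dist (c i) u = n →
      ∃ hc : c i ∈ {w | κ w = i},
        (G.induce {w | κ w = i}).Reachable ⟨u, hu⟩ ⟨c i, hc⟩ := by
    intro n
    induction n with
    | zero =>
      intro i u hu hdist
      have : c i = u := (hG.dist_eq_zero_iff).mp hdist
      subst this
      exact ⟨hu, SimpleGraph.Reachable.refl _⟩
    | succ n ih =>
      intro i u hu hdist
      obtain ⟨u', hadj, hd'⟩ := exists_adj_dist hG (c i) u n hdist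
      have hu' : u' ∈ {w | κ w = i} := hstep i u u' hu hadj (by omega)
      obtain ⟨hc, hr⟩ := ih i u' hu' hd'
      refine ⟨hc, ?_⟩
      have hedge : (G.induce {w | κ w = i}).Adj ⟨u, hu⟩ ⟨u', hu'⟩ := hadj
      exact hedge.reachable.trans hr
  -- the private points give nonemptiness of the regions
  have hκpriv : ∀ i : Fin t, ∃ p, κ p = i := by
    intro i
    obtain ⟨p, hp1, hp2⟩ := hpriv i
    refine ⟨p, κeq p i ?_⟩
    intro j hj
    apply hkey_lt
    have h1 : sc i p ≤ 0 := by simp only [hsc]; omega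
    have h2 : 1 ≤ sc j p := by
      have := hp2 j hj
      simp only [hsc]
      omega
    omega
  have hcκ : ∀ i : Fin t, κ (c i) = i := by
    intro i
    obtain ⟨p, hp⟩ := hκpriv i
    obtain ⟨hc, -⟩ := hreach (G.dist (c i) p) i p hp rfl
    exact hc
  -- walking towards `c b` while the scores of all other regions stay larger
  have hW : ∀ (i j : Fin t), i ≠ j → ∀ (b : Fin t), b = i ∨ b = j →
      ∀ (n : ℕ) (u : V), G.dist (c b) u = n →
      (∀ l, l ≠ i → l ≠ j → sc b u < sc l u) →
      κ u = b ∨ ∃ a ∈ {w | κ w = i}, ∃ b' ∈ {w | κ w = j}, G.Adj a b' := by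
    intro i j hij b hb n
    induction n with
    | zero =>
      intro u hdist _
      left
      have : c b = u := (hG.dist_eq_zero_iff).mp hdist
      rw [← this]
      exact hcκ b
    | succ n ih =>
      intro u hdist hinv
      have hκu : κ u = i ∨ κ u = j := by
        by_contra hcon
        push_neg at hcon
        have h1 := hinv (κ u) hcon.1 hcon.2
        exact absurd (κle u b) (not_le.mpr (hkey_lt u b (κ u) h1))
      obtain ⟨u', hadj, hd'⟩ := exists_adj_dist hG (c b) u n hdist
      have hinv' : ∀ l, l ≠ i → l ≠ j → sc b u' < sc l u' := by
        intro l h1 h2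
        have ha := hsc_adj l u u' hadj
        have hbu : sc b u' = sc b u - 1 := by
          simp only [hsc]
          omega
        have := hinv l h1 h2
        omega
      rcases ih u' hd' hinv' with hb' | hedge
      · rcases hb with rfl | rfl
        · rcases hκu with hui | huj
          · exact Or.inl hui
          · exact Or.inr ⟨u', hb', u, huj, hadj.symm⟩
        · rcases hκu with hui | huj
          · exact Or.inr ⟨u, hui, u', hb', hadj⟩
          · exact Or.inl huj
      · exact Or.inr hedge
  -- pairwise adjacency of the regions
  have hadj_pair : ∀ i j, i ≠ j →
      ∃ a ∈ {w | κ w = i}, ∃ b ∈ {w | κ w = j}, G.Adj a b := by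
    intro i j hij
    obtain ⟨v, hv1, hv2, hv3⟩ := hpair i j hij
    have hscls : ∀ (b0 : Fin t), b0 = i ∨ b0 = j →
        ∀ l, l ≠ i → l ≠ j → sc b0 v < sc l v := by
      intro b0 hb0 l h1 h2
      have := hv3 l h1 h2
      rcases hb0 with rfl | rfl <;> · simp only [hsc]; omega
    have hκv : κ v = i ∨ κ v = j := by
      by_contra hcon
      push_neg at hcon
      have h1 := hscls i (Or.inl rfl) (κ v) hcon.1 hcon.2
      exact absurd (κle v i) (not_le.mpr (hkey_lt v i (κ v) h1))
    rcases hκv with hvi | hvj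
    · rcases hW i j hij j (Or.inr rfl) (G.dist (c j) v) v rfl
        (hscls j (Or.inr rfl)) with hb | he
      · exact absurd (hvi.symm.trans hb) hij
      · exact he
    · rcases hW i j hij i (Or.inl rfl) (G.dist (c i) v) v rfl
        (hscls i (Or.inl rfl)) with hb | he
      · exact absurd (hb.symm.trans hvj) hij
      · exact he
  refine ⟨fun i => {w | κ w = i}, ?_, ?_, ?_, hadj_pair⟩
  · intro i
    obtain ⟨p, hp⟩ := hκpriv i
    exact ⟨p, hp⟩
  · intro i
    rw [SimpleGraph.connected_iff]
    constructor
    · intro a b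
      obtain ⟨hc1, hr1⟩ := hreach (G.dist (c i) (a : V)) i (a : V) a.2 rfl
      obtain ⟨hc2, hr2⟩ := hreach (G.dist (c i) (b : V)) i (b : V) b.2 rfl
      exact hr1.trans hr2.symm
    · obtain ⟨p, hp⟩ := hκpriv i
      exact ⟨⟨p, hp⟩⟩
  · intro i j hij
    rw [Set.disjoint_left]
    rintro w hwi hwj
    exact hij (hwi.symm.trans hwj)

private lemma sum_pow_le_aux (m s : ℕ) :
    ∑ j ∈ Finset.range s, m ^ (j + 1) ≤ (m + 1) ^ s := by
  induction s with
  | zero => simp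
  | succ s ih =>
    rw [Finset.sum_range_succ, pow_succ (m + 1)]
    have h1 : m ^ (s + 1) = m * m ^ s := by ring
    have h2 : m * m ^ s ≤ m * (m + 1) ^ s :=
      Nat.mul_le_mul_left m (Nat.pow_le_pow_left (Nat.le_succ m) s)
    have h3 : (m + 1) ^ s + m * (m + 1) ^ s = (m + 1) ^ s * (m + 1) := by ring
    omega

private lemma sum_choose_le_aux (m t : ℕ) (ht : 1 ≤ t) :
    ∑ j ∈ Finset.range t, m.choose j ≤ (m + 1) ^ (t - 1) + 1 := by
  obtain ⟨s, rfl⟩ : ∃ s, t = s + 1 := ⟨t - 1, by omega⟩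
  rw [Finset.sum_range_succ']
  simp only [Nat.choose_zero_right, Nat.add_sub_cancel]
  have h1 : ∑ j ∈ Finset.range s, m.choose (j + 1) ≤ ∑ j ∈ Finset.range s, m ^ (j + 1) :=
    Finset.sum_le_sum fun j _ => Nat.choose_le_pow m (j + 1)
  have h2 := sum_pow_le_aux m s
  omega

end Auxiliary

/-- If `G` is a `K_t`-minor-free graph of order `n` and diameter `d` with a resolving set
of size `k`, then `n ≤ (dk+1)^{t−1} + 1`. -/
theorem statement16 [Fintype V] (G : SimpleGraph V) (hG : G.Connected)
    (t d k : ℕ) (hminor : ¬ G.HasCompleteMinor t) (hd : G.diam = d)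
    (R : Finset V) (hR : G.IsResolvingSet ↑R) (hk : R.card = k) :
    Fintype.card V ≤ (d * k + 1) ^ (t - 1) + 1 := by
  classical
  rcases Nat.eq_zero_or_pos t with rfl | htpos
  · exact absurd ⟨Fin.elim0, fun i => i.elim0, fun i => i.elim0, fun i => i.elim0,
      fun i => i.elim0⟩ hminor
  have hV : Nonempty V := hG.nonempty
  have hnetop : G.ediam ≠ ⊤ := by
    obtain ⟨u, v, huv⟩ := G.exists_edist_eq_ediam_of_finite
    rw [← huv]
    exact (SimpleGraph.edist_ne_top_iff_reachable).mpr (hG u v)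
  have hdist_le : ∀ x v : V, G.dist x v ≤ d := by
    intro x v
    rw [← hd]
    exact SimpleGraph.dist_le_diam hnetop
  set E : Finset (V × ℕ) := R ×ˢ Finset.range d with hE
  set τ : V → Finset (V × ℕ) := fun v => E.filter (fun e => G.dist e.1 v ≤ e.2) with hτ
  have hmem : ∀ (v : V) (e : V × ℕ), e ∈ E → (e ∈ τ v ↔ G.dist e.1 v ≤ e.2) := by
    intro v e he
    simp [hτ, Finset.mem_filter, he]
  have hτE : ∀ v, τ v ⊆ E := fun v => Finset.filter_subset _ _
  have hinj : Function.Injective τ := by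
    intro u v huv
    by_contra hne'
    obtain ⟨x, hxR, hxd⟩ := hR u v hne'
    have main : ∀ u' v' : V, τ u' = τ v' → G.dist x u' < G.dist x v' → False := by
      intro u' v' h hlt
      have hvd : G.dist x v' ≤ d := hdist_le x v'
      have hmemE : (x, G.dist x u') ∈ E := by
        simp only [hE, Finset.mem_product, Finset.mem_range]
        exact ⟨hxR, by omega⟩
      have h1 : (x, G.dist x u') ∈ τ u' := (hmem u' _ hmemE).mpr le_rfl
      rw [h] at h1
      have h2 := (hmem v' _ hmemE).mp h1
      simp only at h2
      omega
    rcases lt_or_gt_of_ne hxd with h | h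
    · exact main u v huv h
    · exact main v u huv.symm h
  set 𝒜 : Finset (Finset (V × ℕ)) := Finset.univ.image τ with h𝒜
  have hcard : Fintype.card V = 𝒜.card := by
    rw [h𝒜, Finset.card_image_of_injective _ hinj, Finset.card_univ]
  have h𝒜E : ∀ s ∈ 𝒜, s ⊆ E := by
    intro s hs
    simp only [h𝒜, Finset.mem_image] at hs
    obtain ⟨v, -, rfl⟩ := hs
    exact hτE v
  -- no set of size `t` is shattered, else we find a `K_t` minor
  have hshat : ∀ s, 𝒜.Shatters s → s.card < t := by
    intro s hs
    by_contra hle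
    push_neg at hle
    obtain ⟨s', hs's, hs'card⟩ := Finset.exists_subset_card_eq hle
    have hsh : 𝒜.Shatters s' := hs.mono_right hs's
    have hs'E : ∀ e ∈ s', e ∈ E := by
      obtain ⟨u, hu, hsu⟩ := hsh.exists_superset
      exact fun e he => h𝒜E u hu (hsu he)
    set g : Fin t → V × ℕ := fun a => ((Finset.equivFinOfCardEq hs'card).symm a : V × ℕ)
      with hg
    have hg_mem : ∀ a, g a ∈ s' := fun a => ((Finset.equivFinOfCardEq hs'card).symm a).2
    have hg_inj : Function.Injective g := by
      intro a b h
      exact (Finset.equivFinOfCardEq hs'card).symm.injective (Subtype.ext h)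
    have htrans : ∀ (v : V) (a : Fin t), g a ∈ τ v ↔ G.dist (g a).1 v ≤ (g a).2 :=
      fun v a => hmem v _ (hs'E _ (hg_mem a))
    have hpriv : ∀ a : Fin t, ∃ p, G.dist (g a).1 p ≤ (g a).2 ∧
        ∀ b, b ≠ a → (g b).2 < G.dist (g b).1 p := by
      intro a
      obtain ⟨u, hu𝒜, hint⟩ := hsh (Finset.singleton_subset_iff.mpr (hg_mem a))
      simp only [h𝒜, Finset.mem_image] at hu𝒜
      obtain ⟨p, -, rfl⟩ := hu𝒜
      have hmem_iff : ∀ b : Fin t, g b ∈ τ p ↔ b = a := by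
        intro b
        constructor
        · intro hb
          have h3 : g b ∈ s' ∩ τ p := Finset.mem_inter.mpr ⟨hg_mem b, hb⟩
          rw [hint] at h3
          exact hg_inj (Finset.mem_singleton.mp h3)
        · rintro rfl
          have h3 : g b ∈ s' ∩ τ p := hint ▸ Finset.mem_singleton_self _
          exact (Finset.mem_inter.mp h3).2
      refine ⟨p, (htrans p a).mp ((hmem_iff a).mpr rfl), ?_⟩
      intro b hb
      have h4 : ¬ (g b ∈ τ p) := fun h => hb ((hmem_iff b).mp h)
      rw [htrans] at h4
      omega
    have hpair : ∀ a b : Fin t, a ≠ b → ∃ v, G.dist (g a).1 v ≤ (g a).2 ∧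
        G.dist (g b).1 v ≤ (g b).2 ∧ ∀ l, l ≠ a → l ≠ b → (g l).2 < G.dist (g l).1 v := by
      intro a b hab
      have hsub : ({g a, g b} : Finset (V × ℕ)) ⊆ s' := by
        intro e he
        rcases Finset.mem_insert.mp he with rfl | he
        · exact hg_mem a
        · exact (Finset.mem_singleton.mp he) ▸ hg_mem b
      obtain ⟨u, hu𝒜, hint⟩ := hsh hsub
      simp only [h𝒜, Finset.mem_image] at hu𝒜
      obtain ⟨p, -, rfl⟩ := hu𝒜
      have hmem_iff : ∀ l : Fin t, g l ∈ τ p ↔ (l = a ∨ l = b) := by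
        intro l
        constructor
        · intro hl
          have h3 : g l ∈ s' ∩ τ p := Finset.mem_inter.mpr ⟨hg_mem l, hl⟩
          rw [hint] at h3
          rcases Finset.mem_insert.mp h3 with h | h
          · exact Or.inl (hg_inj h)
          · exact Or.inr (hg_inj (Finset.mem_singleton.mp h))
        · intro hl
          have hmem2 : g l ∈ ({g a, g b} : Finset (V × ℕ)) := by
            rcases hl with rfl | rfl
            · exact Finset.mem_insert_self _ _
            · exact Finset.mem_insert_of_mem (Finset.mem_singleton_self _)
          have h3 : g l ∈ s' ∩ τ p := hint ▸ hmem2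
          exact (Finset.mem_inter.mp h3).2
      refine ⟨p, (htrans p a).mp ((hmem_iff a).mpr (Or.inl rfl)),
        (htrans p b).mp ((hmem_iff b).mpr (Or.inr rfl)), ?_⟩
      intro l h1 h2
      have h4 : ¬ (g l ∈ τ p) := fun h => by
        rcases (hmem_iff l).mp h with h | h
        exacts [h1 h, h2 h]
      rw [htrans] at h4
      omega
    exact hminor (complete_minor_of_balls hG (fun a => (g a).1) (fun a => (g a).2) hpriv hpair)
  have hsub : 𝒜.shatterer ⊆ (Finset.range t).biUnion (fun j => E.powersetCard j) := by
    intro s hs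
    rw [Finset.mem_shatterer] at hs
    have h1 : s.card < t := hshat s hs
    have h2 : s ⊆ E := by
      obtain ⟨u, hu, hsu⟩ := hs.exists_superset
      exact hsu.trans (h𝒜E u hu)
    rw [Finset.mem_biUnion]
    exact ⟨s.card, Finset.mem_range.mpr h1, Finset.mem_powersetCard.mpr ⟨h2, rfl⟩⟩
  have hEcard : E.card = d * k := by
    rw [hE, Finset.card_product, Finset.card_range, hk, Nat.mul_comm]
  calc Fintype.card V = 𝒜.card := hcard
    _ ≤ 𝒜.shatterer.card := Finset.card_le_card_shatterer 𝒜
    _ ≤ ((Finset.range t).biUnion (fun j => E.powersetCard j)).card :=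
        Finset.card_le_card hsub
    _ ≤ ∑ j ∈ Finset.range t, (E.powersetCard j).card := Finset.card_biUnion_le
    _ = ∑ j ∈ Finset.range t, (d * k).choose j := by
        refine Finset.sum_congr rfl fun j _ => ?_
        rw [Finset.card_powersetCard, hEcard]
    _ ≤ (d * k + 1) ^ (t - 1) + 1 := sum_choose_le_aux (d * k) t htpos
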